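/- arXiv:2205.12729 — 3 statements merged into one kernel-verified Lean document; each statement's English description precedes it below -/
import Mathlib

section
/- For the CDF-scale log-linear ensemble F̄ = exp(∑_m w_m log F_m) with derivative f̄(y) = exp(∑_m w_m log F_m(y)) · ∑_m w_m f_m(y)/F_m(y), one has −log f̄(y) ≤ −∑_m w_m log f_m(y) for every y. -/
open Real

/-- The CDF-scale log-linear ensemble has pointwise better-than-average
negative log-likelihood. -/
theorem loglinear_cdf_pool_nll
    (M : ℕ) (F : Fin M → ℝ → ℝ)
    (hdiff : ∀ m, Differentiable ℝ (F m))
    (hmono : ∀ m, StrictMono (F m))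
    (w : Fin M → ℝ) (hw : ∀ m, 0 ≤ w m) (hw1 : ∑ m, w m = 1)
    (y : ℝ) (hFpos : ∀ m, 0 < F m y) (hfpos : ∀ m, 0 < deriv (F m) y) :
    -Real.log (Real.exp (∑ m, w m * Real.log (F m y)) *
        ∑ m, w m * (deriv (F m) y / F m y)) ≤
      -∑ m, w m * Real.log (deriv (F m) y) := by
  set z : Fin M → ℝ := fun m => deriv (F m) y / F m y with hz
  have hzpos : ∀ m, 0 < z m := fun m => div_pos (hfpos m) (hFpos m)
  have hex : ∃ m ∈ Finset.univ, 0 < w m := by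
    by_contra h
    push_neg at h
    have : ∑ m, w m = 0 := Finset.sum_eq_zero fun m hm =>
      le_antisymm (h m hm) (hw m)
    simp [this] at hw1
  obtain ⟨m0, _, hm0⟩ := hex
  have hSpos : 0 < ∑ m, w m * z m := by
    apply Finset.sum_pos' (fun m _ => mul_nonneg (hw m) (hzpos m).le)
    exact ⟨m0, Finset.mem_univ m0, mul_pos hm0 (hzpos m0)⟩
  have hgm : ∏ m, z m ^ w m ≤ ∑ m, w m * z m :=
    Real.geom_mean_le_arith_mean_weighted _ _ _ (fun m _ => hw m) hw1
      (fun m _ => (hzpos m).le)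
  have hprodpos : 0 < ∏ m, z m ^ w m :=
    Finset.prod_pos fun m _ => Real.rpow_pos_of_pos (hzpos m) _
  have hlog : ∑ m, w m * Real.log (z m) ≤ Real.log (∑ m, w m * z m) := by
    calc ∑ m, w m * Real.log (z m)
        = Real.log (∏ m, z m ^ w m) := by
          rw [Real.log_prod (fun m _ => (Real.rpow_pos_of_pos (hzpos m) _).ne')]
          exact Finset.sum_congr rfl fun m _ => by
            rw [Real.log_rpow (hzpos m)]
      _ ≤ Real.log (∑ m, w m * z m) := Real.log_le_log hprodpos hgm
  have hzlog : ∀ m, Real.log (z m) = Real.log (deriv (F m) y) - Real.log (F m y) :=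
    fun m => Real.log_div (hfpos m).ne' (hFpos m).ne'
  rw [Real.log_mul (Real.exp_pos _).ne' hSpos.ne', Real.log_exp]
  have : ∑ m, w m * Real.log (z m)
      = ∑ m, w m * Real.log (deriv (F m) y) - ∑ m, w m * Real.log (F m y) := by
    rw [← Finset.sum_sub_distrib]
    exact Finset.sum_congr rfl fun m _ => by rw [hzlog m]; ring
  linarith [hlog]
end

section
/- The logit-pooled probability p* = expit(∑_m w_m logit(p_m)) minimizes over p ∈ (0,1) the worst-case excess log-loss max_{y∈{0,1}} [NLL(p,y) − ∑_m w_m NLL(p_m,y)], where NLL(p,1) = −log p and NLL(p,0) = −log(1−p). -/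
open Real

/-- Minimax optimality of logit pooling for the binary log-score:
`p* = expit (∑ m, w m * logit (p m))` minimizes over `p ∈ (0,1)` the
worst-case excess log-loss over the two outcomes. -/
theorem logit_pooling_minimax_log_score
    (M : ℕ) (p : Fin M → ℝ) (hp : ∀ m, p m ∈ Set.Ioo (0 : ℝ) 1)
    (w : Fin M → ℝ) (hw : ∀ m, 0 ≤ w m) (hw1 : ∑ m, w m = 1) :
    ∀ q ∈ Set.Ioo (0 : ℝ) 1,
      max (-Real.log (1 / (1 + Real.exp (-(∑ m, w m * Real.log (p m / (1 - p m))))))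
            + ∑ m, w m * Real.log (p m))
          (-Real.log (1 - 1 / (1 + Real.exp (-(∑ m, w m * Real.log (p m / (1 - p m))))))
            + ∑ m, w m * Real.log (1 - p m)) ≤
        max (-Real.log q + ∑ m, w m * Real.log (p m))
            (-Real.log (1 - q) + ∑ m, w m * Real.log (1 - p m)) := by
  intro q hq
  set A := ∑ m, w m * Real.log (p m) with hA
  set B := ∑ m, w m * Real.log (1 - p m) with hB
  set S := ∑ m, w m * Real.log (p m / (1 - p m)) with hS
  have hSAB : S = A - B := by
    rw [hS, hA, hB, ← Finset.sum_sub_distrib]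
    refine Finset.sum_congr rfl fun m _ => ?_
    have h := hp m
    rw [Real.log_div (ne_of_gt h.1) (by linarith [h.2] : (1 : ℝ) - p m ≠ 0)]
    ring
  set pstar := 1 / (1 + Real.exp (-S)) with hps
  have hE : 0 < Real.exp (-S) := Real.exp_pos _
  have hden : 0 < 1 + Real.exp (-S) := by linarith
  have hps0 : 0 < pstar := by rw [hps]; positivity
  have hps1 : pstar < 1 := by rw [hps, div_lt_one hden]; linarith
  have h1ps : 1 - pstar = Real.exp (-S) / (1 + Real.exp (-S)) := by
    rw [hps]; field_simp; ring
  have hlogps : Real.log pstar = -Real.log (1 + Real.exp (-S)) := by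
    rw [hps, Real.log_div one_ne_zero (ne_of_gt hden), Real.log_one]; ring
  have hlog1ps : Real.log (1 - pstar) = -S - Real.log (1 + Real.exp (-S)) := by
    rw [h1ps, Real.log_div (ne_of_gt hE) (ne_of_gt hden), Real.log_exp]
  have heq : -Real.log (1 - pstar) + B = -Real.log pstar + A := by
    rw [hlogps, hlog1ps]; linarith
  rcases le_total q pstar with h | h
  · have hlog : Real.log q ≤ Real.log pstar := Real.log_le_log hq.1 h
    refine le_trans (max_le ?_ ?_) (le_max_left _ _)
    · linarith
    · linarith
  · have hlog : Real.log (1 - q) ≤ Real.log (1 - pstar) :=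
      Real.log_le_log (by linarith [hq.2]) (by linarith)
    refine le_trans (max_le ?_ ?_) (le_max_right _ _)
    · linarith
    · linarith
end

section
/- Linear pooling is minimax optimal for the ranked probability score: F̄ = ∑_m w_m F_m minimizes over candidate CDFs F the quantity max_k [RPS(F, y_k) − ∑_m w_m RPS(F_m, y_k)]. -/
open Finset

/-- Linear pooling is minimax optimal for the ranked probability score:
`F̄ = ∑ m, w m • F m` minimizes over candidate CDFs the worst-case (over
categories) excess RPS relative to the weighted average of the members' RPS. -/
theorem linear_pooling_minimax_rps
    (K : ℕ) (hK : 2 ≤ K) (M : ℕ)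
    (F : Fin M → Fin K → ℝ)
    (hF01 : ∀ m l, F m l ∈ Set.Icc (0 : ℝ) 1)
    (hFmono : ∀ m, Monotone (F m))
    (hFlast : ∀ m, F m ⟨K - 1, by omega⟩ = 1)
    (w : Fin M → ℝ) (hw : ∀ m, 0 ≤ w m) (hw1 : ∑ m, w m = 1) :
    let RPS : (Fin K → ℝ) → Fin K → ℝ := fun G k =>
      ((K : ℝ) - 1)⁻¹ * ∑ l, (G l - if k ≤ l then (1 : ℝ) else 0) ^ 2
    ∀ G : Fin K → ℝ, (∀ l, G l ∈ Set.Icc (0 : ℝ) 1) → Monotone G →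
      G ⟨K - 1, by omega⟩ = 1 →
      (Finset.univ.sup' (by simp [Finset.univ_nonempty_iff]; exact Fin.pos_iff_nonempty.mp (by omega))
          (fun k : Fin K => RPS (fun l => ∑ m, w m * F m l) k - ∑ m, w m * RPS (F m) k)) ≤
        (Finset.univ.sup' (by simp [Finset.univ_nonempty_iff]; exact Fin.pos_iff_nonempty.mp (by omega))
          (fun k : Fin K => RPS G k - ∑ m, w m * RPS (F m) k)) := by
  intro RPS G hG01 hGmono hGlast
  have hRPS : ∀ (H : Fin K → ℝ) (k : Fin K),
      RPS H k = ((K : ℝ) - 1)⁻¹ * ∑ l, (H l - if k ≤ l then (1 : ℝ) else 0) ^ 2 :=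
    fun _ _ => rfl
  set c : ℝ := ((K : ℝ) - 1)⁻¹ with hc_def
  have hc : 0 ≤ c := by
    have h2 : (2 : ℝ) ≤ (K : ℝ) := by exact_mod_cast hK
    apply inv_nonneg.mpr; linarith
  set Fbar : Fin K → ℝ := fun l => ∑ m, w m * F m l with hFbar_def
  have hFbar0 : ∀ l, 0 ≤ Fbar l := fun l =>
    Finset.sum_nonneg fun m _ => mul_nonneg (hw m) (hF01 m l).1
  have hFbarmono : Monotone Fbar := by
    intro a b hab
    exact Finset.sum_le_sum fun m _ => mul_le_mul_of_nonneg_left (hFmono m hab) (hw m)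
  have hKlt : K - 1 < K := by omega
  have hFbarlast : Fbar ⟨K - 1, hKlt⟩ = 1 := by
    have : ∀ m : Fin M, F m ⟨K - 1, hKlt⟩ = 1 := fun m => hFlast m
    simp only [hFbar_def, this, mul_one, hw1]
  -- expansion lemma
  have expand : ∀ (H : Fin K → ℝ) (k : Fin K),
      RPS H k - ∑ m, w m * RPS (F m) k
      = c * ((∑ l, (H l ^ 2 - ∑ m, w m * F m l ^ 2))
          - 2 * ∑ l, (if k ≤ l then H l - Fbar l else 0)) := by
    intro H k
    have h1 : ∑ m, w m * RPS (F m) k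
        = c * ∑ l, ∑ m, w m * (F m l - if k ≤ l then (1 : ℝ) else 0) ^ 2 := by
      simp only [hRPS]
      rw [Finset.sum_comm, Finset.mul_sum]
      refine Finset.sum_congr rfl fun m _ => ?_
      rw [← Finset.mul_sum]; ring
    have h2 : ∀ l : Fin K,
        (H l - if k ≤ l then (1 : ℝ) else 0) ^ 2
          - ∑ m, w m * (F m l - if k ≤ l then (1 : ℝ) else 0) ^ 2
        = (H l ^ 2 - ∑ m, w m * F m l ^ 2) - 2 * (if k ≤ l then H l - Fbar l else 0) := by
      intro l
      set I : ℝ := if k ≤ l then (1 : ℝ) else 0 with hI_def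
      have hs : ∑ m, w m * (F m l - I) ^ 2
          = (∑ m, w m * F m l ^ 2) - 2 * I * Fbar l + I ^ 2 := by
        have : ∀ m : Fin M, w m * (F m l - I) ^ 2
            = w m * F m l ^ 2 - 2 * I * (w m * F m l) + I ^ 2 * w m := fun m => by ring
        rw [Finset.sum_congr rfl fun m _ => this m]
        rw [Finset.sum_add_distrib, Finset.sum_sub_distrib, ← Finset.mul_sum, ← Finset.mul_sum,
          hw1, mul_one]
      have hI2 : (if k ≤ l then H l - Fbar l else 0) = I * (H l - Fbar l) := by
        simp only [hI_def]; split_ifs <;> simp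
      rw [hs, hI2]; ring
    rw [h1, hRPS, ← mul_sub, ← Finset.sum_sub_distrib,
      Finset.sum_congr rfl fun l _ => h2 l, Finset.sum_sub_distrib, ← Finset.mul_sum]
  set A : ℝ := ∑ l, (Fbar l ^ 2 - ∑ m, w m * F m l ^ 2) with hA_def
  have lhs_eq : ∀ k : Fin K, RPS Fbar k - ∑ m, w m * RPS (F m) k = c * A := by
    intro k
    rw [expand Fbar k]
    simp only [sub_self, ite_self, Finset.sum_const_zero, mul_zero, sub_zero, ← hA_def]
  -- the convex weights
  set Gx : ℕ → ℝ := fun i => if h : i < K then G ⟨i, h⟩ else 1 with hGx_def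
  set Bx : ℕ → ℝ := fun i => if h : i < K then Fbar ⟨i, h⟩ else 1 with hBx_def
  set Lam : ℕ → ℝ := fun i => (Gx i + Bx i) / 2 with hLam_def
  set Lamh : ℕ → ℝ := fun i => if i = 0 then 0 else Lam (i - 1) with hLamh_def
  have hLamh0 : Lamh 0 = 0 := by simp [hLamh_def]
  have hLamhS : ∀ i, Lamh (i + 1) = Lam i := by intro i; simp [hLamh_def]
  set lam : Fin K → ℝ := fun k => Lamh ((k : ℕ) + 1) - Lamh (k : ℕ) with hlam_def
  have hLamVal : ∀ l : Fin K, Lam (l : ℕ) = (G l + Fbar l) / 2 := by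
    intro l
    simp only [hLam_def, hGx_def, hBx_def, dif_pos l.2, Fin.eta]
  have hlam_nonneg : ∀ k : Fin K, 0 ≤ lam k := by
    intro k
    simp only [hlam_def]
    cases hkv : (k : ℕ) with
    | zero =>
      rw [hLamhS, hLamh0, sub_zero]
      have h0K : (0 : ℕ) < K := by omega
      have e0 : Lam 0 = (G ⟨0, h0K⟩ + Fbar ⟨0, h0K⟩) / 2 := hLamVal ⟨0, h0K⟩
      have := (hG01 ⟨0, h0K⟩).1
      have := hFbar0 ⟨0, h0K⟩
      rw [e0]; linarith
    | succ j =>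
      have hjK : j + 1 < K := by have := k.2; omega
      have hj' : j < K := by omega
      rw [hLamhS, hLamhS, sub_nonneg]
      have e1 : Lam j = (G ⟨j, hj'⟩ + Fbar ⟨j, hj'⟩) / 2 := hLamVal ⟨j, hj'⟩
      have e2 : Lam (j + 1) = (G ⟨j + 1, hjK⟩ + Fbar ⟨j + 1, hjK⟩) / 2 := hLamVal ⟨j + 1, hjK⟩
      have hle : (⟨j, hj'⟩ : Fin K) ≤ ⟨j + 1, hjK⟩ := by simp [Fin.mk_le_mk]
      have h1 := hGmono hle
      have h2 := hFbarmono hle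
      rw [e1, e2]; linarith
  have hlamsum : ∑ k : Fin K, lam k = 1 := by
    have h1 : ∑ k : Fin K, lam k
        = ∑ i ∈ Finset.range K, (Lamh (i + 1) - Lamh i) :=
      Fin.sum_univ_eq_sum_range (fun i => Lamh (i + 1) - Lamh i) K
    rw [h1, Finset.sum_range_sub, hLamh0, sub_zero]
    have hKs : K = (K - 1) + 1 := by omega
    rw [hKs, hLamhS]
    have := hLamVal ⟨K - 1, hKlt⟩
    rw [hGlast, hFbarlast] at this
    rw [this]; norm_num
  -- cumulative sums
  have hΛ : ∀ l : Fin K, (∑ k : Fin K, if k ≤ l then lam k else 0) = (G l + Fbar l) / 2 := by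
    intro l
    have h1 : ∑ k : Fin K, (if k ≤ l then lam k else 0)
        = ∑ i ∈ Finset.range K, (if i ≤ (l : ℕ) then Lamh (i + 1) - Lamh i else 0) := by
      rw [← Fin.sum_univ_eq_sum_range (fun i => if i ≤ (l : ℕ) then Lamh (i + 1) - Lamh i else 0) K]
      refine Finset.sum_congr rfl fun k _ => ?_
      simp only [hlam_def, Fin.le_def]
    rw [h1]
    have hsub : Finset.range ((l : ℕ) + 1) ⊆ Finset.range K := by
      apply Finset.range_subset_range.mpr; exact l.2
    rw [← Finset.sum_subset hsub]
    · rw [Finset.sum_congr rfl (fun i hi => if_pos (by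
        simp only [Finset.mem_range] at hi; omega)), Finset.sum_range_sub, hLamh0, sub_zero,
        hLamhS, hLamVal]
    · intro i _ hi
      simp only [Finset.mem_range] at hi
      rw [if_neg (by omega)]
  set B : ℝ := ∑ l, (G l ^ 2 - Fbar l ^ 2) with hB_def
  have hcomb : ∑ k : Fin K, lam k * (∑ l, if k ≤ l then G l - Fbar l else 0) = B / 2 := by
    have h1 : ∀ k : Fin K, lam k * (∑ l, if k ≤ l then G l - Fbar l else 0)
        = ∑ l, (if k ≤ l then lam k else 0) * (G l - Fbar l) := by
      intro k
      rw [Finset.mul_sum]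
      refine Finset.sum_congr rfl fun l _ => ?_
      split_ifs <;> simp
    rw [Finset.sum_congr rfl fun k _ => h1 k, Finset.sum_comm]
    have h2 : ∀ l : Fin K, (∑ k : Fin K, (if k ≤ l then lam k else 0) * (G l - Fbar l))
        = (G l ^ 2 - Fbar l ^ 2) / 2 := by
      intro l
      rw [← Finset.sum_mul, hΛ]; ring
    rw [Finset.sum_congr rfl fun l _ => h2 l, hB_def, ← Finset.sum_div]
  -- assemble
  have hAG : (∑ l, (G l ^ 2 - ∑ m, w m * F m l ^ 2)) = A + B := by
    rw [hA_def, hB_def, ← Finset.sum_add_distrib]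
    exact Finset.sum_congr rfl fun l _ => by ring
  have hne : (Finset.univ : Finset (Fin K)).Nonempty := by
    simp [Finset.univ_nonempty_iff]; exact Fin.pos_iff_nonempty.mp (by omega)
  have hS : c * A ≤ Finset.univ.sup' hne
      (fun k : Fin K => RPS G k - ∑ m, w m * RPS (F m) k) := by
    set S := Finset.univ.sup' hne (fun k : Fin K => RPS G k - ∑ m, w m * RPS (F m) k) with hS_def
    have hle : ∀ k : Fin K, RPS G k - ∑ m, w m * RPS (F m) k ≤ S := by
      intro k
      rw [hS_def]
      exact Finset.le_sup' (fun k : Fin K => RPS G k - ∑ m, w m * RPS (F m) k)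
        (Finset.mem_univ k)
    calc c * A = ∑ k : Fin K, lam k * (RPS G k - ∑ m, w m * RPS (F m) k) := by
          have h3 : ∀ k : Fin K, lam k * (RPS G k - ∑ m, w m * RPS (F m) k)
              = c * (A + B) * lam k
                - 2 * c * (lam k * (∑ l, if k ≤ l then G l - Fbar l else 0)) := by
            intro k
            rw [expand G k, hAG]; ring
          rw [Finset.sum_congr rfl fun k _ => h3 k, Finset.sum_sub_distrib,
            ← Finset.mul_sum, ← Finset.mul_sum, hlamsum, hcomb, mul_one]
          ring
      _ ≤ ∑ k : Fin K, lam k * S :=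
          Finset.sum_le_sum fun k _ => mul_le_mul_of_nonneg_left (hle k) (hlam_nonneg k)
      _ = S := by rw [← Finset.sum_mul, hlamsum, one_mul]
  refine le_trans (Finset.sup'_le _ _ fun k _ => ?_) hS
  rw [lhs_eq k]
end
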